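/- For every integer a ≥ 2 and integer n ≥ a, sum over compositions l_1 + ... + l_{a-1} = n-1 into positive integers of the product 1^{l_1} 2^{l_2} ⋯ (a-1)^{l_{a-1}} equals sum over the same compositions of the multinomial coefficient C(n-1; l_1, l_2, ..., l_{a-1}). -/

import Mathlib

open Finset
open scoped Classical

namespace Stmt17Aux

open Nat

noncomputable def comps (k m : ℕ) : Finset (Fin k → ℕ) :=
  (Finset.Nat.antidiagonalTuple k m).filter fun l => ∀ j, 0 < l j

lemma mem_comps {k m : ℕ} {l : Fin k → ℕ} :
    l ∈ comps k m ↔ (∀ j, 0 < l j) ∧ ∑ j, l j = m := by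
  simp [comps, Finset.Nat.mem_antidiagonalTuple, and_comm]

noncomputable def F (k m : ℕ) : ℕ := ∑ l ∈ comps k m, ∏ j : Fin k, ((j : ℕ) + 1) ^ l j
noncomputable def G (k m : ℕ) : ℕ := ∑ l ∈ comps k m, Nat.multinomial Finset.univ l

lemma comps_succ_zero (k : ℕ) : comps (k + 1) 0 = ∅ := by
  ext l
  simp only [mem_comps, Finset.notMem_empty, iff_false, not_and]
  intro hpos hsum
  have := (Finset.sum_eq_zero_iff.1 hsum) 0 (Finset.mem_univ _)
  exact absurd this (hpos 0).ne'

lemma comps_zero_succ (m : ℕ) : comps 0 (m + 1) = ∅ := by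
  ext l
  simp [mem_comps]

lemma FG_zero (m : ℕ) : F 0 m = G 0 m := by
  unfold F G
  refine Finset.sum_congr rfl fun l _ => ?_
  simp [Finset.univ_eq_empty (α := Fin 0)]

lemma F_rec (k m : ℕ) : F (k + 1) (m + 1) = (k + 1) * F k m + (k + 1) * F (k + 1) m := by
  unfold F
  rw [← Finset.sum_filter_add_sum_filter_not (comps (k + 1) (m + 1))
    (fun l => l (Fin.last k) = 1)]
  congr 1
  · rw [Finset.mul_sum]
    refine Finset.sum_nbij' (i := fun l => Fin.init l) (j := fun l' => Fin.snoc l' 1)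
      ?_ ?_ ?_ ?_ ?_
    · intro l hl
      rw [Finset.mem_filter, mem_comps] at hl
      obtain ⟨⟨hpos, hsum⟩, hlast⟩ := hl
      rw [mem_comps]
      refine ⟨fun j => hpos _, ?_⟩
      rw [Fin.sum_univ_castSucc] at hsum
      simp only [Fin.init]
      omega
    · intro l' hl'
      rw [mem_comps] at hl'
      obtain ⟨hpos, hsum⟩ := hl'
      rw [Finset.mem_filter, mem_comps]
      refine ⟨⟨fun j => ?_, ?_⟩, by simp⟩
      · refine Fin.lastCases ?_ (fun i => ?_) j
        · simp
        · simpa using hpos i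
      · rw [Fin.sum_univ_castSucc]
        simp [hsum]
    · intro l hl
      rw [Finset.mem_filter] at hl
      have h := Fin.snoc_init_self l
      rw [hl.2] at h
      exact h
    · intro l' _
      simp
    · intro l hl
      rw [Finset.mem_filter] at hl
      rw [Fin.prod_univ_castSucc]
      simp only [Fin.val_last, Fin.coe_castSucc, hl.2, pow_one, Fin.init]
      ring
  · rw [Finset.mul_sum]
    refine Finset.sum_nbij'
      (i := fun l => Function.update l (Fin.last k) (l (Fin.last k) - 1))
      (j := fun l' => Function.update l' (Fin.last k) (l' (Fin.last k) + 1))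
      ?_ ?_ ?_ ?_ ?_
    · intro l hl
      rw [Finset.mem_filter, mem_comps] at hl
      obtain ⟨⟨hpos, hsum⟩, hlast⟩ := hl
      have h2 : 2 ≤ l (Fin.last k) := by
        have := hpos (Fin.last k); omega
      rw [mem_comps]
      constructor
      · intro j
        rcases eq_or_ne j (Fin.last k) with rfl | hne
        · rw [Function.update_self]; omega
        · rw [Function.update_of_ne hne]; exact hpos j
      · rw [Finset.sum_update_of_mem (Finset.mem_univ _)]
        have h3 : l (Fin.last k) + ∑ i ∈ Finset.univ.erase (Fin.last k), l i = m + 1 := by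
          rw [Finset.add_sum_erase _ l (Finset.mem_univ _)]; exact hsum
        rw [Finset.sdiff_singleton_eq_erase]
        omega
    · intro l' hl'
      rw [mem_comps] at hl'
      obtain ⟨hpos, hsum⟩ := hl'
      rw [Finset.mem_filter, mem_comps]
      refine ⟨⟨fun j => ?_, ?_⟩, ?_⟩
      · rcases eq_or_ne j (Fin.last k) with rfl | hne
        · rw [Function.update_self]; omega
        · rw [Function.update_of_ne hne]; exact hpos j
      · rw [Finset.sum_update_of_mem (Finset.mem_univ _)]
        have h3 : l' (Fin.last k) + ∑ i ∈ Finset.univ.erase (Fin.last k), l' i = m := by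
          rw [Finset.add_sum_erase _ l' (Finset.mem_univ _)]; exact hsum
        rw [Finset.sdiff_singleton_eq_erase]
        omega
      · rw [Function.update_self]
        have := hpos (Fin.last k); omega
    · intro l hl
      rw [Finset.mem_filter, mem_comps] at hl
      obtain ⟨⟨hpos, _⟩, hlast⟩ := hl
      have h1 : 1 ≤ l (Fin.last k) := hpos _
      rw [Function.update_self, Function.update_idem]
      have : l (Fin.last k) - 1 + 1 = l (Fin.last k) := by omega
      rw [this, Function.update_eq_self]
    · intro l' _
      rw [Function.update_self, Function.update_idem]
      simp
    · intro l hl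
      rw [Finset.mem_filter, mem_comps] at hl
      obtain ⟨⟨hpos, _⟩, hlast⟩ := hl
      have h1 : 1 ≤ l (Fin.last k) := hpos _
      rw [Fin.prod_univ_castSucc, Fin.prod_univ_castSucc]
      have hupd : ∀ j : Fin k,
          Function.update l (Fin.last k) (l (Fin.last k) - 1) (Fin.castSucc j) =
            l (Fin.castSucc j) :=
        fun j => Function.update_of_ne (Fin.castSucc_lt_last j).ne _ _
      simp only [hupd, Function.update_self, Fin.val_last]
      rw [← Nat.sub_add_cancel h1, pow_succ]
      rw [Nat.sub_add_cancel h1]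
      ring


section
variable {k : ℕ}

lemma mult_erase_of_zero (j : Fin (k + 1)) (f : Fin (k + 1) → ℕ) (hj : f j = 0) :
    Nat.multinomial Finset.univ f = Nat.multinomial (Finset.univ.erase j) f := by
  conv_lhs => rw [← Finset.insert_erase (Finset.mem_univ j)]
  rw [Nat.multinomial_insert (Finset.notMem_erase j _), hj]
  simp

lemma mult_erase_reindex (j : Fin (k + 1)) (f : Fin (k + 1) → ℕ) :
    Nat.multinomial (Finset.univ.erase j) f = Nat.multinomial Finset.univ (f ∘ j.succAbove) := by
  have hsum : ∑ i ∈ Finset.univ.erase j, f i = ∑ i : Fin k, f (j.succAbove i) := by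
    have h1 : ∑ i : Fin (k+1), f i = f j + ∑ i : Fin k, f (j.succAbove i) :=
      Fin.sum_univ_succAbove f j
    have h2 : f j + ∑ i ∈ Finset.univ.erase j, f i = ∑ i : Fin (k+1), f i :=
      Finset.add_sum_erase _ f (Finset.mem_univ j)
    omega
  have hprod : ∏ i ∈ Finset.univ.erase j, (f i)! = ∏ i : Fin k, (f (j.succAbove i))! := by
    have h1 : ∏ i : Fin (k+1), (f i)! = (f j)! * ∏ i : Fin k, (f (j.succAbove i))! :=
      Fin.prod_univ_succAbove _ j
    have h2 : (f j)! * ∏ i ∈ Finset.univ.erase j, (f i)! = ∏ i : Fin (k+1), (f i)! :=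
      Finset.mul_prod_erase _ (fun i => (f i)!) (Finset.mem_univ j)
    exact Nat.eq_of_mul_eq_mul_left (f j).factorial_pos (h2.trans h1)
  rw [Nat.multinomial, Nat.multinomial, hsum, hprod]
  rfl

lemma pascal (l : Fin (k + 1) → ℕ) (hpos : 0 < ∑ j, l j) :
    Nat.multinomial Finset.univ l
      = ∑ j, if 0 < l j then
          Nat.multinomial Finset.univ (Function.update l j (l j - 1)) else 0 := by
  set m := ∑ j, l j with hm
  have hP : 0 < ∏ i, (l i)! := Finset.prod_pos fun i _ => (l i).factorial_pos
  refine Nat.eq_of_mul_eq_mul_left hP ?_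
  rw [Nat.multinomial_spec]
  rw [Finset.mul_sum]
  have key : ∀ j : Fin (k + 1),
      (∏ i, (l i)!) * (if 0 < l j then
        Nat.multinomial Finset.univ (Function.update l j (l j - 1)) else 0)
      = l j * (m - 1)! := by
    intro j
    by_cases hj : 0 < l j
    · rw [if_pos hj]
      have hsum : ∑ i, Function.update l j (l j - 1) i = m - 1 := by
        rw [Finset.sum_update_of_mem (Finset.mem_univ j)]
        have h2 : l j + ∑ i ∈ Finset.univ.erase j, l i = m :=
          Finset.add_sum_erase _ l (Finset.mem_univ j)
        rw [← Finset.sdiff_singleton_eq_erase] at h2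
        omega
      have hprodu : ∏ i, (Function.update l j (l j - 1) i)!
          = (l j - 1)! * ∏ i ∈ Finset.univ \ {j}, (l i)! := by
        rw [Finset.prod_congr rfl fun i _ =>
          (Function.apply_update (fun _ v => v !) l j (l j - 1) i),
          Finset.prod_update_of_mem (Finset.mem_univ j)]
      have hprodl : ∏ i, (l i)! = l j * ((l j - 1)! * ∏ i ∈ Finset.univ \ {j}, (l i)!) := by
        rw [Finset.sdiff_singleton_eq_erase, ← Finset.mul_prod_erase _ _ (Finset.mem_univ j),
          ← Nat.mul_factorial_pred hj.ne', mul_assoc]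
      have hkey : ∏ i, (l i)! = l j * ∏ i, (Function.update l j (l j - 1) i)! := by
        rw [hprodu]; exact hprodl
      rw [hkey, mul_assoc, Nat.multinomial_spec, hsum]
    · rw [if_neg hj]
      simp [Nat.eq_zero_of_not_pos hj]
  rw [Finset.sum_congr rfl fun j _ => key j, ← Finset.sum_mul]
  rw [← hm, ← Nat.mul_factorial_pred hpos.ne']

end

noncomputable def Dset (k m : ℕ) (j : Fin (k + 1)) : Finset (Fin (k + 1) → ℕ) :=
  (Finset.Nat.antidiagonalTuple (k + 1) m).filter (fun l' => ∀ i, i ≠ j → 0 < l' i)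

lemma mem_Dset {k m : ℕ} {j : Fin (k + 1)} {l' : Fin (k + 1) → ℕ} :
    l' ∈ Dset k m j ↔ (∀ i, i ≠ j → 0 < l' i) ∧ ∑ i, l' i = m := by
  simp [Dset, Finset.Nat.mem_antidiagonalTuple, and_comm]

lemma G_rec (k m : ℕ) : G (k + 1) (m + 1) = (k + 1) * G k m + (k + 1) * G (k + 1) m := by
  conv_lhs => rw [G]
  have step1 : ∑ l ∈ comps (k + 1) (m + 1), Nat.multinomial Finset.univ l
      = ∑ l ∈ comps (k + 1) (m + 1), ∑ j : Fin (k + 1),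
          Nat.multinomial Finset.univ (Function.update l j (l j - 1)) := by
    refine Finset.sum_congr rfl fun l hl => ?_
    rw [mem_comps] at hl
    rw [pascal l (by rw [hl.2]; omega)]
    exact Finset.sum_congr rfl fun j _ => if_pos (hl.1 j)
  rw [step1, Finset.sum_comm]
  clear step1
  have inner : ∀ j : Fin (k + 1),
      ∑ l ∈ comps (k + 1) (m + 1), Nat.multinomial Finset.univ (Function.update l j (l j - 1))
      = G k m + G (k + 1) m := by
    intro j
    have hD : ∑ l ∈ comps (k + 1) (m + 1),
          Nat.multinomial Finset.univ (Function.update l j (l j - 1))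
        = ∑ l' ∈ Dset k m j, Nat.multinomial Finset.univ l' := by
      refine Finset.sum_nbij' (i := fun l => Function.update l j (l j - 1))
        (j := fun l' => Function.update l' j (l' j + 1)) ?_ ?_ ?_ ?_ (fun _ _ => rfl)
      · intro l hl
        rw [mem_comps] at hl
        obtain ⟨hpos, hsum⟩ := hl
        rw [mem_Dset]
        constructor
        · intro i hi
          rw [Function.update_of_ne hi]; exact hpos i
        · rw [Finset.sum_update_of_mem (Finset.mem_univ _)]
          have h2 : l j + ∑ i ∈ Finset.univ.erase j, l i = m + 1 := by
            rw [Finset.add_sum_erase _ l (Finset.mem_univ _)]; exact hsum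
          have h1 : 1 ≤ l j := hpos j
          rw [Finset.sdiff_singleton_eq_erase]
          omega
      · intro l' hl'
        rw [mem_Dset] at hl'
        obtain ⟨hpos, hsum⟩ := hl'
        rw [mem_comps]
        constructor
        · intro i
          rcases eq_or_ne i j with rfl | hne
          · rw [Function.update_self]; omega
          · rw [Function.update_of_ne hne]; exact hpos i hne
        · rw [Finset.sum_update_of_mem (Finset.mem_univ _)]
          have h2 : l' j + ∑ i ∈ Finset.univ.erase j, l' i = m := by
            rw [Finset.add_sum_erase _ l' (Finset.mem_univ _)]; exact hsum
          rw [Finset.sdiff_singleton_eq_erase]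
          omega
      · intro l hl
        rw [mem_comps] at hl
        have h1 : 1 ≤ l j := hl.1 j
        rw [Function.update_self, Function.update_idem]
        have : l j - 1 + 1 = l j := by omega
        rw [this, Function.update_eq_self]
      · intro l' _
        rw [Function.update_self, Function.update_idem]
        simp
    rw [hD, ← Finset.sum_filter_add_sum_filter_not (Dset k m j) (fun l' => 0 < l' j)]
    clear hD
    have hfilter : (Dset k m j).filter (fun l' => 0 < l' j) = comps (k + 1) m := by
      ext l'
      rw [Finset.mem_filter, mem_Dset, mem_comps]
      constructor
      · rintro ⟨⟨hpos, hsum⟩, hj⟩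
        refine ⟨fun i => ?_, hsum⟩
        rcases eq_or_ne i j with rfl | hne
        · exact hj
        · exact hpos i hne
      · rintro ⟨hpos, hsum⟩
        exact ⟨⟨fun i _ => hpos i, hsum⟩, hpos j⟩
    have hzero : ∑ l' ∈ (Dset k m j).filter (fun l' => ¬0 < l' j), Nat.multinomial Finset.univ l'
        = G k m := by
      rw [G]
      refine Finset.sum_nbij' (i := fun l' => l' ∘ j.succAbove)
        (j := fun t => Fin.insertNth j 0 t) ?_ ?_ ?_ ?_ ?_
      · intro l' hl'
        rw [Finset.mem_filter, mem_Dset] at hl'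
        obtain ⟨⟨hpos, hsum⟩, hj0⟩ := hl'
        have hj0' : l' j = 0 := by omega
        rw [mem_comps]
        constructor
        · intro i
          exact hpos _ (Fin.succAbove_ne j i)
        · have h1 : ∑ i : Fin (k + 1), l' i = l' j + ∑ i : Fin k, l' (j.succAbove i) :=
            Fin.sum_univ_succAbove l' j
          simp only [Function.comp]
          omega
      · intro t ht
        rw [mem_comps] at ht
        obtain ⟨hpos, hsum⟩ := ht
        rw [Finset.mem_filter, mem_Dset]
        refine ⟨⟨fun i hi => ?_, ?_⟩, ?_⟩
        · obtain ⟨z, hz⟩ := Fin.exists_succAbove_eq hi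
          rw [← hz, Fin.insertNth_apply_succAbove]
          exact hpos z
        · rw [Fin.sum_univ_succAbove _ j]
          simp [Fin.insertNth_apply_same, Fin.insertNth_apply_succAbove, hsum]
        · simp [Fin.insertNth_apply_same]
      · intro l' hl'
        rw [Finset.mem_filter, mem_Dset] at hl'
        have hj0' : l' j = 0 := by omega
        funext i
        rcases eq_or_ne i j with rfl | hne
        · rw [Fin.insertNth_apply_same, hj0']
        · obtain ⟨z, hz⟩ := Fin.exists_succAbove_eq hne
          rw [← hz, Fin.insertNth_apply_succAbove]
          rfl
      · intro t _
        funext i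
        simp [Function.comp, Fin.insertNth_apply_succAbove]
      · intro l' hl'
        rw [Finset.mem_filter, mem_Dset] at hl'
        have hj0' : l' j = 0 := by omega
        rw [mult_erase_of_zero j l' hj0', mult_erase_reindex]
    rw [hfilter, hzero]
    rw [← G]
    ring
  rw [Finset.sum_congr rfl fun j _ => inner j, Finset.sum_const, Finset.card_univ,
    Fintype.card_fin, smul_eq_mul]
  ring


lemma FG (m k : ℕ) : F k m = G k m := by
  induction m generalizing k with
  | zero =>
    cases k with
    | zero => exact FG_zero 0
    | succ k => rw [F, G, comps_succ_zero]; simp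
  | succ m ih =>
    cases k with
    | zero => exact FG_zero (m + 1)
    | succ k => rw [F_rec, G_rec, ih k, ih (k + 1)]

lemma transfer (k n : ℕ) (hn : 1 ≤ n) (w : (Fin k → ℕ) → ℕ) :
    ∑ l ∈ (Finset.univ : Finset (Fin k → Fin n)).filter
        (fun l => (∀ j, 1 ≤ (l j : ℕ)) ∧ ∑ j, (l j : ℕ) = n - 1),
      w (fun j => (l j : ℕ))
    = ∑ l ∈ comps k (n - 1), w l := by
  refine Finset.sum_nbij' (i := fun l => fun j => (l j : ℕ))
    (j := fun l' => fun j => (⟨min (l' j) (n - 1), by omega⟩ : Fin n))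
    ?_ ?_ ?_ ?_ (fun _ _ => rfl)
  · intro l hl
    rw [Finset.mem_filter] at hl
    rw [mem_comps]
    exact ⟨fun j => hl.2.1 j, hl.2.2⟩
  · intro l' hl'
    rw [mem_comps] at hl'
    obtain ⟨hpos, hsum⟩ := hl'
    have hle : ∀ j, l' j ≤ n - 1 := by
      intro j
      rw [← hsum]
      exact Finset.single_le_sum (f := l') (fun i _ => Nat.zero_le _) (Finset.mem_univ j)
    rw [Finset.mem_filter]
    refine ⟨Finset.mem_univ _, fun j => ?_, ?_⟩
    · have := hpos j
      have := hle j
      simp only [Fin.val_mk]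
      omega
    · simp only [Fin.val_mk]
      rw [Finset.sum_congr rfl fun j _ => min_eq_left (hle j)]
      exact hsum
  · intro l hl
    rw [Finset.mem_filter] at hl
    have hle : ∀ j, (l j : ℕ) ≤ n - 1 := by
      intro j
      rw [← hl.2.2]
      exact Finset.single_le_sum (f := fun j => (l j : ℕ)) (fun i _ => Nat.zero_le _)
        (Finset.mem_univ j)
    funext j
    exact Fin.ext (by simp [min_eq_left (hle j)])
  · intro l' hl'
    rw [mem_comps] at hl'
    have hle : ∀ j, l' j ≤ n - 1 := by
      intro j
      rw [← hl'.2]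
      exact Finset.single_le_sum (f := l') (fun i _ => Nat.zero_le _) (Finset.mem_univ j)
    funext j
    simp [min_eq_left (hle j)]

end Stmt17Aux

/-- Summing over ordered `(a-1)`-tuples of positive integers `l₁ + ⋯ + l_{a-1} = n - 1`, the
sum of the products `1^{l₁} 2^{l₂} ⋯ (a-1)^{l_{a-1}}` equals the sum of the multinomial
coefficients `C(n-1; l₁, …, l_{a-1})`. -/
theorem stmt_17 (a n : ℕ) (ha : 2 ≤ a) (hn : a ≤ n) :
    ∑ l ∈ (Finset.univ : Finset (Fin (a - 1) → Fin n)).filter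
        (fun l => (∀ j, 1 ≤ (l j : ℕ)) ∧ ∑ j, (l j : ℕ) = n - 1),
      ∏ j : Fin (a - 1), ((j : ℕ) + 1) ^ ((l j : ℕ))
    = ∑ l ∈ (Finset.univ : Finset (Fin (a - 1) → Fin n)).filter
        (fun l => (∀ j, 1 ≤ (l j : ℕ)) ∧ ∑ j, (l j : ℕ) = n - 1),
      Nat.multinomial Finset.univ (fun j => (l j : ℕ)) := by
  have h1 : 1 ≤ n := by omega
  have e1 := Stmt17Aux.transfer (a - 1) n h1
    (fun l => ∏ j : Fin (a - 1), ((j : ℕ) + 1) ^ l j)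
  have e2 := Stmt17Aux.transfer (a - 1) n h1
    (fun l => Nat.multinomial Finset.univ l)
  simp only at e1 e2
  rw [e1, e2]
  exact Stmt17Aux.FG (n - 1) (a - 1)
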